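/- Under the hypotheses of the purely collisional solution (algebraic relations among F_1, F_2, F_3 as above), the Carleman-truncated linear system at truncation order N_C \geq 3 reproduces the nonlinear dynamics exactly: if y_k(0) = f(0)^{\otimes k} for k = 1, ..., N_C and the y_k evolve by the truncated Carleman linear ODE (where dy_k/dt = F_1^{(k)} y_k + F_2^{(k)} y_{k+1} + F_3^{(k)} y_{k+2} with terms beyond index N_C dropped), then y_1(t) = f(t) for all t \geq 0, where f solves the nonlinear ODE df/dt = F_1 f + F_2 f^{\otimes 2} + F_3 f^{\otimes 3}. -/

import Mathlib

open Kronecker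

/-- The Carleman lift `F₁^{(k)} = ∑_{j=0}^{k-1} I^{⊗j} ⊗ F₁ ⊗ I^{⊗(k-j-1)}` of a `Q×Q`
matrix to the `k`-fold tensor power. -/
noncomputable def F1lift {Q : ℕ} (F₁ : Matrix (Fin Q) (Fin Q) ℂ) (k : ℕ) :
    Matrix (Fin k → Fin Q) (Fin k → Fin Q) ℂ :=
  Matrix.of fun a b =>
    ∑ j : Fin k, F₁ (a j) (b j) *
      ∏ i ∈ Finset.univ.erase j, (if a i = b i then (1 : ℂ) else 0)

/-- The Carleman lift `F₂^{(k)} = ∑_{j=0}^{k-1} I^{⊗j} ⊗ F₂ ⊗ I^{⊗(k-j-1)}` of a `Q×Q²`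
matrix, mapping the `(k+1)`-fold tensor power to the `k`-fold one. -/
noncomputable def F2lift {Q : ℕ} (F₂ : Matrix (Fin Q) (Fin Q × Fin Q) ℂ) (k : ℕ) :
    Matrix (Fin k → Fin Q) (Fin (k + 1) → Fin Q) ℂ :=
  Matrix.of fun a b =>
    ∑ j : Fin k, F₂ (a j) (b j.castSucc, b j.succ) *
      ∏ i ∈ Finset.univ.erase j,
        (if (i : ℕ) < (j : ℕ) then (if a i = b i.castSucc then (1 : ℂ) else 0)
          else (if a i = b i.succ then (1 : ℂ) else 0))

/-- The Carleman lift `F₃^{(k)} = ∑_{j=0}^{k-1} I^{⊗j} ⊗ F₃ ⊗ I^{⊗(k-j-1)}` of a `Q×Q³`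
matrix, mapping the `(k+2)`-fold tensor power to the `k`-fold one. -/
noncomputable def F3lift {Q : ℕ} (F₃ : Matrix (Fin Q) (Fin Q × Fin Q × Fin Q) ℂ) (k : ℕ) :
    Matrix (Fin k → Fin Q) (Fin (k + 2) → Fin Q) ℂ :=
  Matrix.of fun a b =>
    ∑ j : Fin k, F₃ (a j) (b j.castSucc.castSucc, b j.succ.castSucc, b j.succ.succ) *
      ∏ i ∈ Finset.univ.erase j,
        (if (i : ℕ) < (j : ℕ) then (if a i = b i.castSucc.castSucc then (1 : ℂ) else 0)
          else (if a i = b i.succ.succ then (1 : ℂ) else 0))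

section CarlemanAux

variable {Q : ℕ} (F₁ : Matrix (Fin Q) (Fin Q) ℂ) (F₂ : Matrix (Fin Q) (Fin Q × Fin Q) ℂ)
  (F₃ : Matrix (Fin Q) (Fin Q × Fin Q × Fin Q) ℂ)

/-! ### Entry computations for lifts at small `k` -/

lemma F1lift_one (a b : Fin 1 → Fin Q) : F1lift F₁ 1 a b = F₁ (a 0) (b 0) := by
  simp [F1lift, show (Finset.univ.erase (0 : Fin 1)) = ∅ by decide]

lemma F2lift_one (a : Fin 1 → Fin Q) (b : Fin 2 → Fin Q) :
    F2lift F₂ 1 a b = F₂ (a 0) (b 0, b 1) := by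
  simp [F2lift, show (Finset.univ.erase (0 : Fin 1)) = ∅ by decide]

lemma F3lift_one (a : Fin 1 → Fin Q) (b : Fin 3 → Fin Q) :
    F3lift F₃ 1 a b = F₃ (a 0) (b 0, b 1, b 2) := by
  simp [F3lift, show (Finset.univ.erase (0 : Fin 1)) = ∅ by decide]

lemma F1lift_two (a b : Fin 2 → Fin Q) : F1lift F₁ 2 a b =
    F₁ (a 0) (b 0) * (if a 1 = b 1 then (1:ℂ) else 0)
      + F₁ (a 1) (b 1) * (if a 0 = b 0 then (1:ℂ) else 0) := by
  simp [F1lift, Fin.sum_univ_two,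
    show (Finset.univ.erase (0 : Fin 2)) = {1} by decide,
    show (Finset.univ.erase (1 : Fin 2)) = {0} by decide]

lemma F2lift_two (a : Fin 2 → Fin Q) (b : Fin 3 → Fin Q) : F2lift F₂ 2 a b =
    F₂ (a 0) (b 0, b 1) * (if a 1 = b 2 then (1:ℂ) else 0)
      + F₂ (a 1) (b 1, b 2) * (if a 0 = b 0 then (1:ℂ) else 0) := by
  simp [F2lift, Fin.sum_univ_two,
    show (Finset.univ.erase (0 : Fin 2)) = {1} by decide,
    show (Finset.univ.erase (1 : Fin 2)) = {0} by decide]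

lemma F3lift_two (a : Fin 2 → Fin Q) (b : Fin 4 → Fin Q) : F3lift F₃ 2 a b =
    F₃ (a 0) (b 0, b 1, b 2) * (if a 1 = b 3 then (1:ℂ) else 0)
      + F₃ (a 1) (b 1, b 2, b 3) * (if a 0 = b 0 then (1:ℂ) else 0) := by
  simp [F3lift, Fin.sum_univ_two,
    show (Finset.univ.erase (0 : Fin 2)) = {1} by decide,
    show (Finset.univ.erase (1 : Fin 2)) = {0} by decide]

lemma F1lift_three (a b : Fin 3 → Fin Q) : F1lift F₁ 3 a b =
    F₁ (a 0) (b 0) * ((if a 1 = b 1 then (1:ℂ) else 0) * (if a 2 = b 2 then (1:ℂ) else 0))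
      + F₁ (a 1) (b 1) * ((if a 0 = b 0 then (1:ℂ) else 0) * (if a 2 = b 2 then (1:ℂ) else 0))
      + F₁ (a 2) (b 2) * ((if a 0 = b 0 then (1:ℂ) else 0) * (if a 1 = b 1 then (1:ℂ) else 0)) := by
  simp [F1lift, Fin.sum_univ_three,
    show (Finset.univ.erase (0 : Fin 3)) = {1, 2} by decide,
    show (Finset.univ.erase (1 : Fin 3)) = {0, 2} by decide,
    show (Finset.univ.erase (2 : Fin 3)) = {0, 1} by decide,
    Finset.prod_insert, Finset.prod_singleton]

lemma F2lift_three (a : Fin 3 → Fin Q) (b : Fin 4 → Fin Q) : F2lift F₂ 3 a b =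
    F₂ (a 0) (b 0, b 1) * ((if a 1 = b 2 then (1:ℂ) else 0) * (if a 2 = b 3 then (1:ℂ) else 0))
      + F₂ (a 1) (b 1, b 2) * ((if a 0 = b 0 then (1:ℂ) else 0) * (if a 2 = b 3 then (1:ℂ) else 0))
      + F₂ (a 2) (b 2, b 3) * ((if a 0 = b 0 then (1:ℂ) else 0) * (if a 1 = b 1 then (1:ℂ) else 0)) := by
  simp [F2lift, Fin.sum_univ_three,
    show (Finset.univ.erase (0 : Fin 3)) = {1, 2} by decide,
    show (Finset.univ.erase (1 : Fin 3)) = {0, 2} by decide,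
    show (Finset.univ.erase (2 : Fin 3)) = {0, 1} by decide,
    Finset.prod_insert, Finset.prod_singleton]

lemma F3lift_three (a : Fin 3 → Fin Q) (b : Fin 5 → Fin Q) : F3lift F₃ 3 a b =
    F₃ (a 0) (b 0, b 1, b 2) * ((if a 1 = b 3 then (1:ℂ) else 0) * (if a 2 = b 4 then (1:ℂ) else 0))
      + F₃ (a 1) (b 1, b 2, b 3) * ((if a 0 = b 0 then (1:ℂ) else 0) * (if a 2 = b 4 then (1:ℂ) else 0))
      + F₃ (a 2) (b 2, b 3, b 4) * ((if a 0 = b 0 then (1:ℂ) else 0) * (if a 1 = b 1 then (1:ℂ) else 0)) := by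
  simp [F3lift, Fin.sum_univ_three,
    show (Finset.univ.erase (0 : Fin 3)) = {1, 2} by decide,
    show (Finset.univ.erase (1 : Fin 3)) = {0, 2} by decide,
    show (Finset.univ.erase (2 : Fin 3)) = {0, 1} by decide,
    Finset.prod_insert, Finset.prod_singleton]

/-! ### Sums over small pi types -/

lemma sum_pi1 (g : (Fin 1 → Fin Q) → ℂ) : ∑ c, g c = ∑ x : Fin Q, g ![x] := by
  rw [← (Equiv.funUnique (Fin 1) (Fin Q)).symm.sum_comp g]
  apply Finset.sum_congr rfl
  intro x _
  congr 1
  funext i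
  fin_cases i
  rfl

lemma sum_pi2 (g : (Fin 2 → Fin Q) → ℂ) : ∑ c, g c = ∑ x : Fin Q, ∑ y : Fin Q, g ![x, y] := by
  rw [← ((piFinTwoEquiv (fun _ => Fin Q)).symm.sum_comp g), Fintype.sum_prod_type]
  apply Finset.sum_congr rfl; intro x _
  apply Finset.sum_congr rfl; intro y _
  congr 1

def pi3Equiv : (Fin 3 → Fin Q) ≃ (Fin Q × Fin Q × Fin Q) where
  toFun c := (c 0, c 1, c 2)
  invFun p := ![p.1, p.2.1, p.2.2]
  left_inv c := by funext i; fin_cases i <;> rfl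
  right_inv p := rfl

lemma sum_pi3 (g : (Fin 3 → Fin Q) → ℂ) :
    ∑ c, g c = ∑ x : Fin Q, ∑ y : Fin Q, ∑ z : Fin Q, g ![x, y, z] := by
  rw [← ((pi3Equiv (Q := Q)).symm.sum_comp g), Fintype.sum_prod_type]
  apply Finset.sum_congr rfl; intro x _
  rw [Fintype.sum_prod_type]
  rfl

/-! ### Composition lemmas for the lifts at small `k` -/

section Comp
variable
    (ha1 : F₂ * (F₁ ⊗ₖ (1 : Matrix (Fin Q) (Fin Q) ℂ)) = 0)
    (ha2 : F₂ * ((1 : Matrix (Fin Q) (Fin Q) ℂ) ⊗ₖ F₁) = 0)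
    (hb1 : F₃ * (F₁ ⊗ₖ (1 : Matrix (Fin Q × Fin Q) (Fin Q × Fin Q) ℂ)) = 0)
    (hb2 : F₃ * ((1 : Matrix (Fin Q) (Fin Q) ℂ) ⊗ₖ (F₁ ⊗ₖ (1 : Matrix (Fin Q) (Fin Q) ℂ))) = 0)
    (hb3 : F₃ * ((1 : Matrix (Fin Q) (Fin Q) ℂ) ⊗ₖ ((1 : Matrix (Fin Q) (Fin Q) ℂ) ⊗ₖ F₁)) = 0)
    (h22 : F₂ * (F₂ ⊗ₖ (1 : Matrix (Fin Q) (Fin Q) ℂ)) = 0)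
    (h22' : F₂ * ((1 : Matrix (Fin Q) (Fin Q) ℂ) ⊗ₖ F₂) = 0)
    (h23 : F₂ * (F₃ ⊗ₖ (1 : Matrix (Fin Q) (Fin Q) ℂ)) = 0)
    (h23' : F₂ * ((1 : Matrix (Fin Q) (Fin Q) ℂ) ⊗ₖ F₃) = 0)
    (h32 : F₃ * (F₂ ⊗ₖ (1 : Matrix (Fin Q × Fin Q) (Fin Q × Fin Q) ℂ)) = 0)
    (hc : F₃ * ((1 : Matrix (Fin Q) (Fin Q) ℂ) ⊗ₖ (F₂ ⊗ₖ (1 : Matrix (Fin Q) (Fin Q) ℂ))) = 0)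
    (h32' : F₃ * ((1 : Matrix (Fin Q) (Fin Q) ℂ) ⊗ₖ ((1 : Matrix (Fin Q) (Fin Q) ℂ) ⊗ₖ F₂)) = 0)
    (h33 : F₃ * (F₃ ⊗ₖ (1 : Matrix (Fin Q × Fin Q) (Fin Q × Fin Q) ℂ)) = 0)
    (h33' : F₃ * ((1 : Matrix (Fin Q) (Fin Q) ℂ) ⊗ₖ (F₃ ⊗ₖ (1 : Matrix (Fin Q) (Fin Q) ℂ))) = 0)
    (h33'' : F₃ * ((1 : Matrix (Fin Q) (Fin Q) ℂ) ⊗ₖ ((1 : Matrix (Fin Q) (Fin Q) ℂ) ⊗ₖ F₃)) = 0)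

set_option maxHeartbeats 1000000 in
include ha1 ha2 in
lemma comp1 : F2lift F₂ 1 * F1lift F₁ 2 = 0 := by
  ext a b
  rw [Matrix.mul_apply, sum_pi2]
  have h1 := congrFun (congrFun ha1 (a 0)) (b 0, b 1)
  have h2 := congrFun (congrFun ha2 (a 0)) (b 0, b 1)
  simp only [Matrix.mul_apply, Fintype.sum_prod_type, Matrix.kroneckerMap_apply,
    Matrix.one_apply, Matrix.zero_apply, Prod.mk.injEq, ite_and, mul_ite, mul_one, mul_zero,
    one_mul, ite_mul, zero_mul,
    Finset.sum_ite_eq, Finset.sum_ite_eq', Finset.mem_univ, if_true] at h1 h2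
  simp only [F2lift_one, F1lift_two, Matrix.cons_val_zero, Matrix.cons_val_one,
    Matrix.head_cons, Matrix.zero_apply, mul_add, mul_ite, mul_one, mul_zero, one_mul,
    Finset.sum_add_distrib, Finset.sum_ite_eq, Finset.sum_ite_eq', Finset.mem_univ, if_true]
  show (∑ x : Fin Q, ∑ x_1 : Fin Q, F₂ (a 0) (x, x_1) * (F₁ x (b 0) * if x_1 = b 1 then (1:ℂ) else 0))
    + (∑ x : Fin Q, ∑ x_1 : Fin Q, F₂ (a 0) (x, x_1) * (F₁ x_1 (b 1) * if x = b 0 then (1:ℂ) else 0)) = 0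
  simp only [mul_add, mul_ite, mul_one, mul_zero, one_mul, Finset.sum_add_distrib,
    Finset.sum_ite_eq, Finset.sum_ite_eq', Finset.mem_univ, if_true]
  rw [h1, h2, add_zero]

set_option maxHeartbeats 1000000 in
include h22 h22' in
lemma comp2 : F2lift F₂ 1 * F2lift F₂ 2 = 0 := by
  ext a b
  rw [Matrix.mul_apply, sum_pi2]
  have h1 := congrFun (congrFun h22 (a 0)) ((b 0, b 1), b 2)
  have h2 := congrFun (congrFun h22' (a 0)) (b 0, (b 1, b 2))
  simp only [Matrix.mul_apply, Fintype.sum_prod_type, Matrix.kroneckerMap_apply,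
    Matrix.one_apply, Matrix.zero_apply, Prod.mk.injEq, ite_and, mul_ite, mul_one, mul_zero,
    one_mul, ite_mul, zero_mul,
    Finset.sum_ite_eq, Finset.sum_ite_eq', Finset.mem_univ, if_true] at h1 h2
  simp only [F2lift_one, F2lift_two, Matrix.cons_val_zero, Matrix.cons_val_one,
    Matrix.head_cons, Matrix.zero_apply, mul_add, mul_ite, mul_one, mul_zero, one_mul,
    Finset.sum_add_distrib, Finset.sum_ite_eq, Finset.sum_ite_eq', Finset.mem_univ, if_true]
  show (∑ x : Fin Q, ∑ x_1 : Fin Q, F₂ (a 0) (x, x_1) * (F₂ x (b 0, b 1) * if x_1 = b 2 then (1:ℂ) else 0))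
    + (∑ x : Fin Q, ∑ x_1 : Fin Q, F₂ (a 0) (x, x_1) * (F₂ x_1 (b 1, b 2) * if x = b 0 then (1:ℂ) else 0)) = 0
  simp only [mul_add, mul_ite, mul_one, mul_zero, one_mul, Finset.sum_add_distrib,
    Finset.sum_ite_eq, Finset.sum_ite_eq', Finset.mem_univ, if_true]
  rw [h1, h2, add_zero]

set_option maxHeartbeats 1000000 in
include h23 h23' in
lemma comp3 : F2lift F₂ 1 * F3lift F₃ 2 = 0 := by
  ext a b
  rw [Matrix.mul_apply, sum_pi2]
  have h1 := congrFun (congrFun h23 (a 0)) ((b 0, b 1, b 2), b 3)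
  have h2 := congrFun (congrFun h23' (a 0)) (b 0, (b 1, b 2, b 3))
  simp only [Matrix.mul_apply, Fintype.sum_prod_type, Matrix.kroneckerMap_apply,
    Matrix.one_apply, Matrix.zero_apply, Prod.mk.injEq, ite_and, mul_ite, mul_one, mul_zero,
    one_mul, ite_mul, zero_mul,
    Finset.sum_ite_eq, Finset.sum_ite_eq', Finset.mem_univ, if_true] at h1 h2
  simp only [F2lift_one, F3lift_two, Matrix.cons_val_zero, Matrix.cons_val_one,
    Matrix.head_cons, Matrix.zero_apply, mul_add, mul_ite, mul_one, mul_zero, one_mul,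
    Finset.sum_add_distrib, Finset.sum_ite_eq, Finset.sum_ite_eq', Finset.mem_univ, if_true]
  show (∑ x : Fin Q, ∑ x_1 : Fin Q, F₂ (a 0) (x, x_1) * (F₃ x (b 0, b 1, b 2) * if x_1 = b 3 then (1:ℂ) else 0))
    + (∑ x : Fin Q, ∑ x_1 : Fin Q, F₂ (a 0) (x, x_1) * (F₃ x_1 (b 1, b 2, b 3) * if x = b 0 then (1:ℂ) else 0)) = 0
  simp only [mul_add, mul_ite, mul_one, mul_zero, one_mul, Finset.sum_add_distrib,
    Finset.sum_ite_eq, Finset.sum_ite_eq', Finset.mem_univ, if_true]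
  rw [h1, h2, add_zero]

set_option maxHeartbeats 1000000 in
include hb1 hb2 hb3 in
lemma comp4 : F3lift F₃ 1 * F1lift F₁ 3 = 0 := by
  ext a b
  rw [Matrix.mul_apply, sum_pi3]
  have h1 := congrFun (congrFun hb1 (a 0)) (b 0, (b 1, b 2))
  have h2 := congrFun (congrFun hb2 (a 0)) (b 0, (b 1, b 2))
  have h3 := congrFun (congrFun hb3 (a 0)) (b 0, (b 1, b 2))
  simp only [Matrix.mul_apply, Fintype.sum_prod_type, Matrix.kroneckerMap_apply,
    Matrix.one_apply, Matrix.zero_apply, Prod.mk.injEq, ite_and, mul_ite, mul_one, mul_zero,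
    one_mul, ite_mul, zero_mul,
    Finset.sum_ite_eq, Finset.sum_ite_eq', Finset.mem_univ, if_true] at h1 h2 h3
  simp only [F3lift_one, F1lift_three, Matrix.cons_val_zero, Matrix.cons_val_one,
    Matrix.head_cons, Matrix.cons_val_two, Matrix.tail_cons,
    Matrix.zero_apply, mul_add, mul_ite, mul_one, mul_zero, one_mul,
    Finset.sum_add_distrib, Finset.sum_ite_eq, Finset.sum_ite_eq', Finset.mem_univ, if_true]
  show (∑ x : Fin Q, ∑ x_1 : Fin Q, F₃ (a 0) (x, x_1, b 2) * (F₁ x (b 0) * if x_1 = b 1 then (1:ℂ) else 0))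
    + (∑ x : Fin Q, ∑ x_1 : Fin Q, F₃ (a 0) (x, x_1, b 2) * (F₁ x_1 (b 1) * if x = b 0 then (1:ℂ) else 0))
    + (∑ x : Fin Q, ∑ x_1 : Fin Q, ∑ x_2 : Fin Q, F₃ (a 0) (x, x_1, x_2) * (F₁ x_2 (b 2)
        * ((if x = b 0 then (1:ℂ) else 0) * if x_1 = b 1 then (1:ℂ) else 0))) = 0
  simp only [mul_add, mul_ite, mul_one, mul_zero, one_mul, Finset.sum_add_distrib,
    Finset.sum_ite_eq, Finset.sum_ite_eq', Finset.mem_univ, if_true]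
  rw [h1, h2, h3, add_zero, add_zero]

set_option maxHeartbeats 1000000 in
include h32 hc h32' in
lemma comp5 : F3lift F₃ 1 * F2lift F₂ 3 = 0 := by
  ext a b
  rw [Matrix.mul_apply, sum_pi3]
  have h1 := congrFun (congrFun h32 (a 0)) ((b 0, b 1), (b 2, b 3))
  have h2 := congrFun (congrFun hc (a 0)) (b 0, ((b 1, b 2), b 3))
  have h3 := congrFun (congrFun h32' (a 0)) (b 0, (b 1, (b 2, b 3)))
  simp only [Matrix.mul_apply, Fintype.sum_prod_type, Matrix.kroneckerMap_apply,
    Matrix.one_apply, Matrix.zero_apply, Prod.mk.injEq, ite_and, mul_ite, mul_one, mul_zero,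
    one_mul, ite_mul, zero_mul,
    Finset.sum_ite_eq, Finset.sum_ite_eq', Finset.mem_univ, if_true] at h1 h2 h3
  simp only [F3lift_one, F2lift_three, Matrix.cons_val_zero, Matrix.cons_val_one,
    Matrix.head_cons, Matrix.cons_val_two, Matrix.tail_cons,
    Matrix.zero_apply, mul_add, mul_ite, mul_one, mul_zero, one_mul,
    Finset.sum_add_distrib, Finset.sum_ite_eq, Finset.sum_ite_eq', Finset.mem_univ, if_true]
  show (∑ x : Fin Q, ∑ x_1 : Fin Q, F₃ (a 0) (x, x_1, b 3) * (F₂ x (b 0, b 1) * if x_1 = b 2 then (1:ℂ) else 0))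
    + (∑ x : Fin Q, ∑ x_1 : Fin Q, F₃ (a 0) (x, x_1, b 3) * (F₂ x_1 (b 1, b 2) * if x = b 0 then (1:ℂ) else 0))
    + (∑ x : Fin Q, ∑ x_1 : Fin Q, ∑ x_2 : Fin Q, F₃ (a 0) (x, x_1, x_2) * (F₂ x_2 (b 2, b 3)
        * ((if x = b 0 then (1:ℂ) else 0) * if x_1 = b 1 then (1:ℂ) else 0))) = 0
  simp only [mul_add, mul_ite, mul_one, mul_zero, one_mul, Finset.sum_add_distrib,
    Finset.sum_ite_eq, Finset.sum_ite_eq', Finset.mem_univ, if_true]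
  rw [h1, h2, h3, add_zero, add_zero]

set_option maxHeartbeats 1000000 in
include h33 h33' h33'' in
lemma comp6 : F3lift F₃ 1 * F3lift F₃ 3 = 0 := by
  ext a b
  rw [Matrix.mul_apply, sum_pi3]
  have h1 := congrFun (congrFun h33 (a 0)) ((b 0, b 1, b 2), (b 3, b 4))
  have h2 := congrFun (congrFun h33' (a 0)) (b 0, ((b 1, b 2, b 3), b 4))
  have h3 := congrFun (congrFun h33'' (a 0)) (b 0, (b 1, (b 2, b 3, b 4)))
  simp only [Matrix.mul_apply, Fintype.sum_prod_type, Matrix.kroneckerMap_apply,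
    Matrix.one_apply, Matrix.zero_apply, Prod.mk.injEq, ite_and, mul_ite, mul_one, mul_zero,
    one_mul, ite_mul, zero_mul,
    Finset.sum_ite_eq, Finset.sum_ite_eq', Finset.mem_univ, if_true] at h1 h2 h3
  simp only [F3lift_one, F3lift_three, Matrix.cons_val_zero, Matrix.cons_val_one,
    Matrix.head_cons, Matrix.cons_val_two, Matrix.tail_cons,
    Matrix.zero_apply, mul_add, mul_ite, mul_one, mul_zero, one_mul,
    Finset.sum_add_distrib, Finset.sum_ite_eq, Finset.sum_ite_eq', Finset.mem_univ, if_true]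
  show (∑ x : Fin Q, ∑ x_1 : Fin Q, F₃ (a 0) (x, x_1, b 4) * (F₃ x (b 0, b 1, b 2) * if x_1 = b 3 then (1:ℂ) else 0))
    + (∑ x : Fin Q, ∑ x_1 : Fin Q, F₃ (a 0) (x, x_1, b 4) * (F₃ x_1 (b 1, b 2, b 3) * if x = b 0 then (1:ℂ) else 0))
    + (∑ x : Fin Q, ∑ x_1 : Fin Q, ∑ x_2 : Fin Q, F₃ (a 0) (x, x_1, x_2) * (F₃ x_2 (b 2, b 3, b 4)
        * ((if x = b 0 then (1:ℂ) else 0) * if x_1 = b 1 then (1:ℂ) else 0))) = 0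
  simp only [mul_add, mul_ite, mul_one, mul_zero, one_mul, Finset.sum_add_distrib,
    Finset.sum_ite_eq, Finset.sum_ite_eq', Finset.mem_univ, if_true]
  rw [h1, h2, h3, add_zero, add_zero]

end Comp

/-! ### Differentiating the exponential relations -/

lemma exp_deriv_zero {N P : Type*} [Fintype N] [Fintype P]
    (G : Matrix N P ℂ)
    (L : Matrix (Fin Q) (Fin Q) ℂ →ₗ[ℂ] Matrix N P ℂ)
    (hL : ∀ x : ℝ, L (NormedSpace.exp ((x : ℂ) • F₁)) = G) : L F₁ = 0 := by
  letI : NormedRing (Matrix (Fin Q) (Fin Q) ℂ) := Matrix.linftyOpNormedRing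
  letI : NormedAlgebra ℂ (Matrix (Fin Q) (Fin Q) ℂ) := Matrix.linftyOpNormedAlgebra
  letI : NormedAddCommGroup (Matrix N P ℂ) := Matrix.linftyOpNormedAddCommGroup
  letI : NormedSpace ℂ (Matrix N P ℂ) := Matrix.linftyOpNormedSpace
  have h2 : HasDerivAt (fun x : ℝ => NormedSpace.exp ((x : ℂ) • F₁)) F₁ 0 := by
    have h0 : HasDerivAt (fun x : ℝ => (x : ℂ)) 1 0 := by
      simpa using (hasDerivAt_id (0 : ℝ)).ofReal_comp
    have h1 := (hasDerivAt_exp_smul_const (𝕂 := ℂ) F₁ (((0 : ℝ) : ℂ))).scomp (x := (0 : ℝ)) h0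
    simp only [Function.comp_def] at h1
    simp at h1
    exact h1
  have h3 : HasDerivAt (fun x : ℝ => L (NormedSpace.exp ((x : ℂ) • F₁))) (L F₁) 0 :=
    (((LinearMap.toContinuousLinearMap L).restrictScalars ℝ).hasFDerivAt).comp_hasDerivAt 0 h2
  simp_rw [hL] at h3
  exact h3.unique (hasDerivAt_const 0 G)

/-! ### mulVec helpers -/

lemma kron_mulVec_pure {l m l' m' : Type*} [Fintype m] [Fintype m']
    (A : Matrix l m ℂ) (B : Matrix l' m' ℂ) (u : m → ℂ) (v : m' → ℂ) :
    (A ⊗ₖ B).mulVec (fun p => u p.1 * v p.2) = fun p => A.mulVec u p.1 * B.mulVec v p.2 := by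
  funext p
  have h : (∑ i, A p.1 i * u i) * (∑ j, B p.2 j * v j)
      = ∑ i, ∑ j, A p.1 i * B p.2 j * (u i * v j) := by
    rw [Finset.sum_mul_sum]
    exact Finset.sum_congr rfl fun i _ => Finset.sum_congr rfl fun j _ => by ring
  simp only [Matrix.mulVec, dotProduct, Matrix.kroneckerMap_apply, Fintype.sum_prod_type]
  rw [h]

lemma triple_kron_mulVec {n₁ n₂ n₃ m₁ m₂ m₃ : Type*}
    [Fintype m₁] [Fintype m₂] [Fintype m₃]
    (A : Matrix n₁ m₁ ℂ) (B : Matrix n₂ m₂ ℂ) (C : Matrix n₃ m₃ ℂ)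
    (u : m₁ → ℂ) (v : m₂ → ℂ) (w : m₃ → ℂ) :
    (A ⊗ₖ (B ⊗ₖ C)).mulVec (fun q => u q.1 * (v q.2.1 * w q.2.2))
      = fun p => A.mulVec u p.1 * (B.mulVec v p.2.1 * C.mulVec w p.2.2) := by
  have e1 := kron_mulVec_pure B C v w
  have e2 := kron_mulVec_pure A (B ⊗ₖ C) u (fun r => v r.1 * w r.2)
  rw [e1] at e2
  exact e2

lemma kill2 {l n₁ n₂ m₁ m₂ : Type*} [Fintype m₁] [Fintype m₂] [Fintype n₁] [Fintype n₂]
    {F : Matrix l (n₁ × n₂) ℂ} {A : Matrix n₁ m₁ ℂ} {B : Matrix n₂ m₂ ℂ}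
    {u : m₁ → ℂ} {v : m₂ → ℂ} {a : n₁ → ℂ} {b : n₂ → ℂ}
    (h : F * (A ⊗ₖ B) = 0) (hA : a = A.mulVec u) (hB : b = B.mulVec v) :
    F.mulVec (fun p => a p.1 * b p.2) = 0 := by
  subst hA hB
  rw [← kron_mulVec_pure, Matrix.mulVec_mulVec, h, Matrix.zero_mulVec]

lemma kill3 {l n₁ n₂ n₃ m₁ m₂ m₃ : Type*}
    [Fintype m₁] [Fintype m₂] [Fintype m₃] [Fintype n₁] [Fintype n₂] [Fintype n₃]
    {F : Matrix l (n₁ × n₂ × n₃) ℂ} {A : Matrix n₁ m₁ ℂ} {B : Matrix n₂ m₂ ℂ} {C : Matrix n₃ m₃ ℂ}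
    {u : m₁ → ℂ} {v : m₂ → ℂ} {w : m₃ → ℂ} {a : n₁ → ℂ} {b : n₂ → ℂ} {c : n₃ → ℂ}
    (h : F * (A ⊗ₖ (B ⊗ₖ C)) = 0) (hA : a = A.mulVec u) (hB : b = B.mulVec v)
    (hC : c = C.mulVec w) :
    F.mulVec (fun p => a p.1 * (b p.2.1 * c p.2.2)) = 0 := by
  subst hA hB hC
  rw [← triple_kron_mulVec, Matrix.mulVec_mulVec, h, Matrix.zero_mulVec]

lemma hasDerivAt_mulVec {m n : Type*} [Fintype m] [Fintype n] (M : Matrix m n ℂ)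
    {v : ℝ → n → ℂ} {v' : n → ℂ} {t : ℝ} (h : HasDerivAt v v' t) :
    HasDerivAt (fun s => M.mulVec (v s)) (M.mulVec v') t := by
  rw [hasDerivAt_pi] at h ⊢
  intro i
  simp only [Matrix.mulVec, dotProduct]
  exact HasDerivAt.fun_sum fun j _ => (h j).const_mul (M i j)

end CarlemanAux

set_option maxHeartbeats 2000000 in
/-- **Exactness of the truncated Carleman system for purely collisional dynamics.**
Under the algebraic relations among `F₁, F₂, F₃` (images of `F₂, F₃` in the `(-1)`-eigenspace
of `F₁`, kernels containing the complement of the zero eigenspace tensor powers, and all the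
listed vanishing compositions), the Carleman-truncated linear system at truncation order
`N_C ≥ 3` reproduces the nonlinear dynamics exactly: if `y_k(0) = f(0)^{⊗k}` for
`k = 1, …, N_C` and the `y_k` evolve by the truncated Carleman linear ODE
`dy_k/dt = F₁^{(k)} y_k + F₂^{(k)} y_{k+1} + F₃^{(k)} y_{k+2}` (terms beyond index `N_C`
dropped), then `y₁(t) = f(t)` for all `t ≥ 0`, where `f` solves
`df/dt = F₁ f + F₂ f^{⊗2} + F₃ f^{⊗3}`. -/
theorem carleman_truncation_exact
    (Q NC : ℕ) (hNC : 3 ≤ NC)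
    (F₁ : Matrix (Fin Q) (Fin Q) ℂ)
    (F₂ : Matrix (Fin Q) (Fin Q × Fin Q) ℂ)
    (F₃ : Matrix (Fin Q) (Fin Q × Fin Q × Fin Q) ℂ)
    (h12 : F₁ * F₂ = -F₂)
    (h13 : F₁ * F₃ = -F₃)
    (hexp2 : ∀ x : ℝ, NormedSpace.exp ((x : ℂ) • F₁) * F₂ = Complex.exp (-(x : ℂ)) • F₂)
    (hexp3 : ∀ x : ℝ, NormedSpace.exp ((x : ℂ) • F₁) * F₃ = Complex.exp (-(x : ℂ)) • F₃)
    (hexp21 : ∀ x : ℝ,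
      F₂ * (NormedSpace.exp ((x : ℂ) • F₁) ⊗ₖ (1 : Matrix (Fin Q) (Fin Q) ℂ)) = F₂)
    (hexp21' : ∀ x : ℝ,
      F₂ * ((1 : Matrix (Fin Q) (Fin Q) ℂ) ⊗ₖ NormedSpace.exp ((x : ℂ) • F₁)) = F₂)
    (hexp31 : ∀ x : ℝ,
      F₃ * (NormedSpace.exp ((x : ℂ) • F₁) ⊗ₖ (1 : Matrix (Fin Q × Fin Q) (Fin Q × Fin Q) ℂ))
        = F₃)
    (hexp31' : ∀ x : ℝ,
      F₃ * ((1 : Matrix (Fin Q) (Fin Q) ℂ) ⊗ₖ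
          (NormedSpace.exp ((x : ℂ) • F₁) ⊗ₖ (1 : Matrix (Fin Q) (Fin Q) ℂ))) = F₃)
    (hexp31'' : ∀ x : ℝ,
      F₃ * ((1 : Matrix (Fin Q) (Fin Q) ℂ) ⊗ₖ
          ((1 : Matrix (Fin Q) (Fin Q) ℂ) ⊗ₖ NormedSpace.exp ((x : ℂ) • F₁))) = F₃)
    (h22 : F₂ * (F₂ ⊗ₖ (1 : Matrix (Fin Q) (Fin Q) ℂ)) = 0)
    (h22' : F₂ * ((1 : Matrix (Fin Q) (Fin Q) ℂ) ⊗ₖ F₂) = 0)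
    (h23 : F₂ * (F₃ ⊗ₖ (1 : Matrix (Fin Q) (Fin Q) ℂ)) = 0)
    (h23' : F₂ * ((1 : Matrix (Fin Q) (Fin Q) ℂ) ⊗ₖ F₃) = 0)
    (h32 : F₃ * (F₂ ⊗ₖ (1 : Matrix (Fin Q × Fin Q) (Fin Q × Fin Q) ℂ)) = 0)
    (h32' : F₃ * ((1 : Matrix (Fin Q) (Fin Q) ℂ) ⊗ₖ
        ((1 : Matrix (Fin Q) (Fin Q) ℂ) ⊗ₖ F₂)) = 0)
    (h33 : F₃ * (F₃ ⊗ₖ (1 : Matrix (Fin Q × Fin Q) (Fin Q × Fin Q) ℂ)) = 0)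
    (h33' : F₃ * ((1 : Matrix (Fin Q) (Fin Q) ℂ) ⊗ₖ
        (F₃ ⊗ₖ (1 : Matrix (Fin Q) (Fin Q) ℂ))) = 0)
    (h33'' : F₃ * ((1 : Matrix (Fin Q) (Fin Q) ℂ) ⊗ₖ
        ((1 : Matrix (Fin Q) (Fin Q) ℂ) ⊗ₖ F₃)) = 0)
    (f0 : Fin Q → ℂ)
    (y : (k : ℕ) → ℝ → ((Fin k → Fin Q) → ℂ))
    (hy0 : ∀ k, 1 ≤ k → k ≤ NC → y k 0 = fun a => ∏ i, f0 (a i))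
    (hyderiv : ∀ k, 1 ≤ k → k ≤ NC → ∀ t : ℝ,
      HasDerivAt (y k)
        ((F1lift F₁ k).mulVec (y k t)
          + (if k + 1 ≤ NC then (F2lift F₂ k).mulVec (y (k + 1) t) else 0)
          + (if k + 2 ≤ NC then (F3lift F₃ k).mulVec (y (k + 2) t) else 0)) t)
    (f : ℝ → Fin Q → ℂ) (hfinit : f 0 = f0)
    (hf : ∀ t : ℝ, HasDerivAt f
      (F₁.mulVec (f t) + F₂.mulVec (fun p => f t p.1 * f t p.2)
        + F₃.mulVec (fun p => f t p.1 * f t p.2.1 * f t p.2.2)) t) :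
    ∀ t : ℝ, 0 ≤ t → y 1 t = fun a => f t (a 0) := by
  classical
  -- Derived identities by differentiating the exponential relations at 0
  have ha1 : F₂ * (F₁ ⊗ₖ (1 : Matrix (Fin Q) (Fin Q) ℂ)) = 0 :=
    exp_deriv_zero F₁ F₂
      { toFun := fun M => F₂ * (M ⊗ₖ (1 : Matrix (Fin Q) (Fin Q) ℂ))
        map_add' := fun M N => by simp only [Matrix.add_kronecker, Matrix.mul_add]
        map_smul' := fun s M => by simp only [Matrix.smul_kronecker, Matrix.mul_smul, RingHom.id_apply] }
      hexp21
  have ha2 : F₂ * ((1 : Matrix (Fin Q) (Fin Q) ℂ) ⊗ₖ F₁) = 0 :=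
    exp_deriv_zero F₁ F₂
      { toFun := fun M => F₂ * ((1 : Matrix (Fin Q) (Fin Q) ℂ) ⊗ₖ M)
        map_add' := fun M N => by simp only [Matrix.kronecker_add, Matrix.mul_add]
        map_smul' := fun s M => by simp only [Matrix.kronecker_smul, Matrix.mul_smul, RingHom.id_apply] }
      hexp21'
  have hb1 : F₃ * (F₁ ⊗ₖ (1 : Matrix (Fin Q × Fin Q) (Fin Q × Fin Q) ℂ)) = 0 :=
    exp_deriv_zero F₁ F₃
      { toFun := fun M => F₃ * (M ⊗ₖ (1 : Matrix (Fin Q × Fin Q) (Fin Q × Fin Q) ℂ))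
        map_add' := fun M N => by simp only [Matrix.add_kronecker, Matrix.mul_add]
        map_smul' := fun s M => by simp only [Matrix.smul_kronecker, Matrix.mul_smul, RingHom.id_apply] }
      hexp31
  have hb2 : F₃ * ((1 : Matrix (Fin Q) (Fin Q) ℂ) ⊗ₖ
      (F₁ ⊗ₖ (1 : Matrix (Fin Q) (Fin Q) ℂ))) = 0 :=
    exp_deriv_zero F₁ F₃
      { toFun := fun M => F₃ * ((1 : Matrix (Fin Q) (Fin Q) ℂ) ⊗ₖ
          (M ⊗ₖ (1 : Matrix (Fin Q) (Fin Q) ℂ)))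
        map_add' := fun M N => by
          simp only [Matrix.add_kronecker, Matrix.kronecker_add, Matrix.mul_add]
        map_smul' := fun s M => by
          simp only [Matrix.smul_kronecker, Matrix.kronecker_smul, Matrix.mul_smul, RingHom.id_apply] }
      hexp31'
  have hb3 : F₃ * ((1 : Matrix (Fin Q) (Fin Q) ℂ) ⊗ₖ
      ((1 : Matrix (Fin Q) (Fin Q) ℂ) ⊗ₖ F₁)) = 0 :=
    exp_deriv_zero F₁ F₃
      { toFun := fun M => F₃ * ((1 : Matrix (Fin Q) (Fin Q) ℂ) ⊗ₖ
          ((1 : Matrix (Fin Q) (Fin Q) ℂ) ⊗ₖ M))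
        map_add' := fun M N => by
          simp only [Matrix.kronecker_add, Matrix.kronecker_add, Matrix.mul_add]
        map_smul' := fun s M => by
          simp only [Matrix.kronecker_smul, Matrix.kronecker_smul, Matrix.mul_smul, RingHom.id_apply] }
      hexp31''
  -- the middle F₂ composition, derived algebraically
  have hc : F₃ * ((1 : Matrix (Fin Q) (Fin Q) ℂ) ⊗ₖ
      (F₂ ⊗ₖ (1 : Matrix (Fin Q) (Fin Q) ℂ))) = 0 := by
    have e1 : ((1 : Matrix (Fin Q) (Fin Q) ℂ) ⊗ₖ (F₂ ⊗ₖ (1 : Matrix (Fin Q) (Fin Q) ℂ)))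
        = -(((1 : Matrix (Fin Q) (Fin Q) ℂ) ⊗ₖ (F₁ ⊗ₖ (1 : Matrix (Fin Q) (Fin Q) ℂ)))
            * ((1 : Matrix (Fin Q) (Fin Q) ℂ) ⊗ₖ (F₂ ⊗ₖ (1 : Matrix (Fin Q) (Fin Q) ℂ)))) := by
      have h12' : F₁ * F₂ = (-1 : ℂ) • F₂ := by rw [h12]; simp
      rw [← Matrix.mul_kronecker_mul, ← Matrix.mul_kronecker_mul, h12',
        Matrix.smul_kronecker, Matrix.kronecker_smul]
      simp
    rw [e1, Matrix.mul_neg, ← Matrix.mul_assoc, hb2, Matrix.zero_mul, neg_zero]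
  -- composition lemmas for the lifts
  have c1 := comp1 F₁ F₂ ha1 ha2
  have c2 := comp2 F₂ h22 h22'
  have c3 := comp3 F₂ F₃ h23 h23'
  have c4 := comp4 F₁ F₃ hb1 hb2 hb3
  have c5 := comp5 F₂ F₃ h32 hc h32'
  have c6 := comp6 F₃ h33 h33' h33''
  -- nested-kronecker versions of the 2-slot hypotheses
  have hb1' : F₃ * (F₁ ⊗ₖ ((1 : Matrix (Fin Q) (Fin Q) ℂ) ⊗ₖ (1 : Matrix (Fin Q) (Fin Q) ℂ)))
      = 0 := by rw [Matrix.one_kronecker_one]; exact hb1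
  have h32n : F₃ * (F₂ ⊗ₖ ((1 : Matrix (Fin Q) (Fin Q) ℂ) ⊗ₖ (1 : Matrix (Fin Q) (Fin Q) ℂ)))
      = 0 := by rw [Matrix.one_kronecker_one]; exact h32
  have h33n : F₃ * (F₃ ⊗ₖ ((1 : Matrix (Fin Q) (Fin Q) ℂ) ⊗ₖ (1 : Matrix (Fin Q) (Fin Q) ℂ)))
      = 0 := by rw [Matrix.one_kronecker_one]; exact h33
  -- the Carleman auxiliary observable is constant in time
  have hg : ∀ s : ℝ, HasDerivAt
      (fun r => (F2lift F₂ 1).mulVec (y 2 r) + (F3lift F₃ 1).mulVec (y 3 r)) 0 s := by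
    intro s
    have d2 := hasDerivAt_mulVec (F2lift F₂ 1) (hyderiv 2 (by omega) (by omega) s)
    have d3 := hasDerivAt_mulVec (F3lift F₃ 1) (hyderiv 3 (by omega) (by omega) s)
    have z2 : (F2lift F₂ 1).mulVec
        ((F1lift F₁ 2).mulVec (y 2 s)
          + (if 2 + 1 ≤ NC then (F2lift F₂ 2).mulVec (y (2 + 1) s) else 0)
          + (if 2 + 2 ≤ NC then (F3lift F₃ 2).mulVec (y (2 + 2) s) else 0)) = 0 := by
      rw [Matrix.mulVec_add, Matrix.mulVec_add, Matrix.mulVec_mulVec, c1, Matrix.zero_mulVec]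
      split_ifs <;>
        simp [Matrix.mulVec_mulVec, c2, c3, Matrix.zero_mulVec, Matrix.mulVec_zero]
    have z3 : (F3lift F₃ 1).mulVec
        ((F1lift F₁ 3).mulVec (y 3 s)
          + (if 3 + 1 ≤ NC then (F2lift F₂ 3).mulVec (y (3 + 1) s) else 0)
          + (if 3 + 2 ≤ NC then (F3lift F₃ 3).mulVec (y (3 + 2) s) else 0)) = 0 := by
      rw [Matrix.mulVec_add, Matrix.mulVec_add, Matrix.mulVec_mulVec, c4, Matrix.zero_mulVec]
      split_ifs <;>
        simp [Matrix.mulVec_mulVec, c5, c6, Matrix.zero_mulVec, Matrix.mulVec_zero]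
    rw [z2] at d2
    rw [z3] at d3
    simpa using d2.fun_add d3
  have gconst : ∀ s : ℝ,
      (F2lift F₂ 1).mulVec (y 2 s) + (F3lift F₃ 1).mulVec (y 3 s)
        = (F2lift F₂ 1).mulVec (y 2 0) + (F3lift F₃ 1).mulVec (y 3 0) := fun s =>
    is_const_of_deriv_eq_zero (fun r => (hg r).differentiableAt) (fun r => (hg r).deriv) s 0
  -- the nonlinear collision term is constant in time
  have hφ : ∀ s : ℝ, HasDerivAt
      (fun r => F₂.mulVec (fun p => f r p.1 * f r p.2)
        + F₃.mulVec (fun p => f r p.1 * f r p.2.1 * f r p.2.2)) 0 s := by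
    intro s
    have hfc : ∀ q, HasDerivAt (fun r => f r q)
        ((F₁.mulVec (f s) + F₂.mulVec (fun p => f s p.1 * f s p.2)
          + F₃.mulVec (fun p => f s p.1 * f s p.2.1 * f s p.2.2)) q) s :=
      fun q => hasDerivAt_pi.1 (hf s) q
    set df : Fin Q → ℂ := F₁.mulVec (f s) + F₂.mulVec (fun p => f s p.1 * f s p.2)
        + F₃.mulVec (fun p => f s p.1 * f s p.2.1 * f s p.2.2) with hdf
    have h2 : HasDerivAt (fun r => fun p : Fin Q × Fin Q => f r p.1 * f r p.2)
        (fun p => df p.1 * f s p.2 + f s p.1 * df p.2) s := by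
      rw [hasDerivAt_pi]
      intro p
      exact (hfc p.1).mul (hfc p.2)
    have h3 : HasDerivAt
        (fun r => fun p : Fin Q × Fin Q × Fin Q => f r p.1 * f r p.2.1 * f r p.2.2)
        (fun p => (df p.1 * f s p.2.1 + f s p.1 * df p.2.1) * f s p.2.2
          + f s p.1 * f s p.2.1 * df p.2.2) s := by
      rw [hasDerivAt_pi]
      intro p
      exact ((hfc p.1).mul (hfc p.2.1)).mul (hfc p.2.2)
    have d2 := hasDerivAt_mulVec F₂ h2
    have d3 := hasDerivAt_mulVec F₃ h3
    have z2 : F₂.mulVec (fun p : Fin Q × Fin Q => df p.1 * f s p.2 + f s p.1 * df p.2) = 0 := by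
      have e : (fun p : Fin Q × Fin Q => df p.1 * f s p.2 + f s p.1 * df p.2)
          = (fun p : Fin Q × Fin Q => (F₁.mulVec (f s)) p.1 * f s p.2)
            + ((fun p : Fin Q × Fin Q =>
                (F₂.mulVec (fun q => f s q.1 * f s q.2)) p.1 * f s p.2)
            + ((fun p : Fin Q × Fin Q =>
                (F₃.mulVec (fun q => f s q.1 * f s q.2.1 * f s q.2.2)) p.1 * f s p.2)
            + ((fun p : Fin Q × Fin Q => f s p.1 * (F₁.mulVec (f s)) p.2)
            + ((fun p : Fin Q × Fin Q =>
                f s p.1 * (F₂.mulVec (fun q => f s q.1 * f s q.2)) p.2)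
            + (fun p : Fin Q × Fin Q =>
                f s p.1 * (F₃.mulVec (fun q => f s q.1 * f s q.2.1 * f s q.2.2)) p.2))))) := by
        funext p
        simp only [hdf, Pi.add_apply]
        ring
      rw [e, Matrix.mulVec_add, Matrix.mulVec_add, Matrix.mulVec_add, Matrix.mulVec_add,
        Matrix.mulVec_add,
        kill2 (u := f s) (v := f s) ha1 rfl (Matrix.one_mulVec _).symm,
        kill2 (u := fun q : Fin Q × Fin Q => f s q.1 * f s q.2) (v := f s) h22 rfl
          (Matrix.one_mulVec _).symm,
        kill2 (u := fun q : Fin Q × Fin Q × Fin Q => f s q.1 * f s q.2.1 * f s q.2.2)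
          (v := f s) h23 rfl (Matrix.one_mulVec _).symm,
        kill2 (u := f s) (v := f s) ha2 (Matrix.one_mulVec _).symm rfl,
        kill2 (u := f s) (v := fun q : Fin Q × Fin Q => f s q.1 * f s q.2) h22'
          (Matrix.one_mulVec _).symm rfl,
        kill2 (u := f s) (v := fun q : Fin Q × Fin Q × Fin Q => f s q.1 * f s q.2.1 * f s q.2.2)
          h23' (Matrix.one_mulVec _).symm rfl]
      simp
    have z3 : F₃.mulVec (fun p : Fin Q × Fin Q × Fin Q =>
        (df p.1 * f s p.2.1 + f s p.1 * df p.2.1) * f s p.2.2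
          + f s p.1 * f s p.2.1 * df p.2.2) = 0 := by
      have e : (fun p : Fin Q × Fin Q × Fin Q =>
          (df p.1 * f s p.2.1 + f s p.1 * df p.2.1) * f s p.2.2
            + f s p.1 * f s p.2.1 * df p.2.2)
          = (fun p : Fin Q × Fin Q × Fin Q =>
              (F₁.mulVec (f s)) p.1 * (f s p.2.1 * f s p.2.2))
            + ((fun p : Fin Q × Fin Q × Fin Q =>
                (F₂.mulVec (fun q => f s q.1 * f s q.2)) p.1 * (f s p.2.1 * f s p.2.2))
            + ((fun p : Fin Q × Fin Q × Fin Q =>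
                (F₃.mulVec (fun q => f s q.1 * f s q.2.1 * f s q.2.2)) p.1
                  * (f s p.2.1 * f s p.2.2))
            + ((fun p : Fin Q × Fin Q × Fin Q =>
                f s p.1 * ((F₁.mulVec (f s)) p.2.1 * f s p.2.2))
            + ((fun p : Fin Q × Fin Q × Fin Q =>
                f s p.1 * ((F₂.mulVec (fun q => f s q.1 * f s q.2)) p.2.1 * f s p.2.2))
            + ((fun p : Fin Q × Fin Q × Fin Q =>
                f s p.1 * ((F₃.mulVec (fun q => f s q.1 * f s q.2.1 * f s q.2.2)) p.2.1
                  * f s p.2.2))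
            + ((fun p : Fin Q × Fin Q × Fin Q =>
                f s p.1 * (f s p.2.1 * (F₁.mulVec (f s)) p.2.2))
            + ((fun p : Fin Q × Fin Q × Fin Q =>
                f s p.1 * (f s p.2.1 * (F₂.mulVec (fun q => f s q.1 * f s q.2)) p.2.2))
            + (fun p : Fin Q × Fin Q × Fin Q =>
                f s p.1 * (f s p.2.1
                  * (F₃.mulVec (fun q => f s q.1 * f s q.2.1 * f s q.2.2)) p.2.2))))))))) := by
        funext p
        simp only [hdf, Pi.add_apply]
        ring
      rw [e, Matrix.mulVec_add, Matrix.mulVec_add, Matrix.mulVec_add, Matrix.mulVec_add,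
        Matrix.mulVec_add, Matrix.mulVec_add, Matrix.mulVec_add, Matrix.mulVec_add,
        kill3 (u := f s) (v := f s) (w := f s) hb1' rfl (Matrix.one_mulVec _).symm
          (Matrix.one_mulVec _).symm,
        kill3 (u := fun q : Fin Q × Fin Q => f s q.1 * f s q.2) (v := f s) (w := f s) h32n rfl
          (Matrix.one_mulVec _).symm (Matrix.one_mulVec _).symm,
        kill3 (u := fun q : Fin Q × Fin Q × Fin Q => f s q.1 * f s q.2.1 * f s q.2.2)
          (v := f s) (w := f s) h33n rfl (Matrix.one_mulVec _).symm (Matrix.one_mulVec _).symm,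
        kill3 (u := f s) (v := f s) (w := f s) hb2 (Matrix.one_mulVec _).symm rfl
          (Matrix.one_mulVec _).symm,
        kill3 (u := f s) (v := fun q : Fin Q × Fin Q => f s q.1 * f s q.2) (w := f s) hc
          (Matrix.one_mulVec _).symm rfl (Matrix.one_mulVec _).symm,
        kill3 (u := f s) (v := fun q : Fin Q × Fin Q × Fin Q => f s q.1 * f s q.2.1 * f s q.2.2)
          (w := f s) h33' (Matrix.one_mulVec _).symm rfl (Matrix.one_mulVec _).symm,
        kill3 (u := f s) (v := f s) (w := f s) hb3 (Matrix.one_mulVec _).symm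
          (Matrix.one_mulVec _).symm rfl,
        kill3 (u := f s) (v := f s) (w := fun q : Fin Q × Fin Q => f s q.1 * f s q.2) h32'
          (Matrix.one_mulVec _).symm (Matrix.one_mulVec _).symm rfl,
        kill3 (u := f s) (v := f s)
          (w := fun q : Fin Q × Fin Q × Fin Q => f s q.1 * f s q.2.1 * f s q.2.2) h33''
          (Matrix.one_mulVec _).symm (Matrix.one_mulVec _).symm rfl]
      simp
    rw [z2] at d2
    rw [z3] at d3
    simpa using d2.fun_add d3
  have φconst : ∀ s : ℝ,
      F₂.mulVec (fun p => f s p.1 * f s p.2)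
          + F₃.mulVec (fun p => f s p.1 * f s p.2.1 * f s p.2.2)
        = F₂.mulVec (fun p => f 0 p.1 * f 0 p.2)
          + F₃.mulVec (fun p => f 0 p.1 * f 0 p.2.1 * f 0 p.2.2) := fun s =>
    is_const_of_deriv_eq_zero (fun r => (hφ r).differentiableAt) (fun r => (hφ r).deriv) s 0
  -- identification of the constant terms
  have link : (F2lift F₂ 1).mulVec (y 2 0) + (F3lift F₃ 1).mulVec (y 3 0)
      = fun a : Fin 1 → Fin Q =>
          (F₂.mulVec (fun p => f 0 p.1 * f 0 p.2)
            + F₃.mulVec (fun p => f 0 p.1 * f 0 p.2.1 * f 0 p.2.2)) (a 0) := by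
    funext a
    rw [hy0 2 (by omega) (by omega), hy0 3 (by omega) (by omega), hfinit]
    simp only [Pi.add_apply, Matrix.mulVec, dotProduct]
    congr 1
    · rw [sum_pi2, Fintype.sum_prod_type]
      apply Finset.sum_congr rfl; intro x _
      apply Finset.sum_congr rfl; intro z _
      rw [F2lift_one]
      simp [Fin.prod_univ_two]
    · rw [sum_pi3, Fintype.sum_prod_type]
      apply Finset.sum_congr rfl; intro x _
      rw [Fintype.sum_prod_type]
      apply Finset.sum_congr rfl; intro z _
      apply Finset.sum_congr rfl; intro u _
      rw [F3lift_one]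
      simp [Fin.prod_univ_three]
  have hA1 : ∀ v : Fin Q → ℂ, (F1lift F₁ 1).mulVec (fun a : Fin 1 → Fin Q => v (a 0))
      = fun a : Fin 1 → Fin Q => F₁.mulVec v (a 0) := by
    intro v
    funext a
    simp only [Matrix.mulVec, dotProduct]
    rw [sum_pi1]
    simp [F1lift_one]
  -- both `y 1` and the projection of `f` satisfy the same affine linear ODE
  have hu' : ∀ s : ℝ, HasDerivAt (y 1)
      ((F1lift F₁ 1).mulVec (y 1 s)
        + ((F2lift F₂ 1).mulVec (y 2 0) + (F3lift F₃ 1).mulVec (y 3 0))) s := by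
    intro s
    have h := hyderiv 1 (by omega) (by omega) s
    have e : (F1lift F₁ 1).mulVec (y 1 s)
        + (if 1 + 1 ≤ NC then (F2lift F₂ 1).mulVec (y (1 + 1) s) else 0)
        + (if 1 + 2 ≤ NC then (F3lift F₃ 1).mulVec (y (1 + 2) s) else 0)
        = (F1lift F₁ 1).mulVec (y 1 s)
          + ((F2lift F₂ 1).mulVec (y 2 0) + (F3lift F₃ 1).mulVec (y 3 0)) := by
      rw [if_pos (by omega : 1 + 1 ≤ NC), if_pos (by omega : 1 + 2 ≤ NC), add_assoc]
      congr 1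
      exact gconst s
    rw [e] at h
    exact h
  have hw' : ∀ s : ℝ, HasDerivAt (fun r => fun a : Fin 1 → Fin Q => f r (a 0))
      ((F1lift F₁ 1).mulVec (fun a : Fin 1 → Fin Q => f s (a 0))
        + ((F2lift F₂ 1).mulVec (y 2 0) + (F3lift F₃ 1).mulVec (y 3 0))) s := by
    intro s
    have hd : HasDerivAt (fun r => fun a : Fin 1 → Fin Q => f r (a 0))
        (fun a : Fin 1 → Fin Q =>
          (F₁.mulVec (f s) + F₂.mulVec (fun p => f s p.1 * f s p.2)
            + F₃.mulVec (fun p => f s p.1 * f s p.2.1 * f s p.2.2)) (a 0)) s := by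
      rw [hasDerivAt_pi]
      intro a
      exact hasDerivAt_pi.1 (hf s) (a 0)
    have e : (fun a : Fin 1 → Fin Q =>
          (F₁.mulVec (f s) + F₂.mulVec (fun p => f s p.1 * f s p.2)
            + F₃.mulVec (fun p => f s p.1 * f s p.2.1 * f s p.2.2)) (a 0))
        = (F1lift F₁ 1).mulVec (fun a : Fin 1 → Fin Q => f s (a 0))
          + ((F2lift F₂ 1).mulVec (y 2 0) + (F3lift F₃ 1).mulVec (y 3 0)) := by
      rw [link]
      funext a
      simp only [Pi.add_apply, hA1 (f s)]
      rw [add_assoc]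
      congr 1
      exact congrFun (φconst s) (a 0)
    rw [e] at hd
    exact hd
  -- uniqueness of solutions of the affine linear ODE
  intro t ht
  have init : y 1 0 = fun a : Fin 1 → Fin Q => f 0 (a 0) := by
    rw [hy0 1 (by omega) (by omega), hfinit]
    funext a
    simp [Fin.prod_univ_one]
  have sol : Set.EqOn (y 1) (fun r => fun a : Fin 1 → Fin Q => f r (a 0)) (Set.Icc 0 t) := by
    set L := LinearMap.toContinuousLinearMap (Matrix.mulVecLin (F1lift F₁ 1)) with hL
    refine ODE_solution_unique (v := fun _ x => (F1lift F₁ 1).mulVec x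
        + ((F2lift F₂ 1).mulVec (y 2 0) + (F3lift F₃ 1).mulVec (y 3 0)))
      (fun _ => L.lipschitz.add (LipschitzWith.const _))
      (fun s _ => (hu' s).continuousAt.continuousWithinAt)
      (fun s _ => (hu' s).hasDerivWithinAt)
      (fun s _ => (hw' s).continuousAt.continuousWithinAt)
      (fun s _ => (hw' s).hasDerivWithinAt)
      init
  exact sol ⟨ht, le_rfl⟩
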